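/- Let k ≥ 3 be an integer and λ a positive divisor of k. The quotient of the presented group ⟨ℓ, x₁, …, x_k ∣ [x_i, x_j] = 1 for all 1 ≤ i, j ≤ k, ℓ⁻¹x_iℓ = x_{i+1} for 1 ≤ i ≤ k−1, ℓ⁻¹x_kℓ = x₁⟩ by the normal closure of the set of elements x_i x_{i+λ}⁻¹ (indices taken modulo k) is isomorphic to the presented group K_λ = ⟨ℓ, x ∣ [x, ℓ^λ] = 1, [x, ℓ⁻ⁱxℓⁱ] = 1 for i = 1, …, λ−1⟩. -/

import Mathlib

open scoped commutatorElement

/-- The relators of `⟨ℓ, x₁, …, x_k ∣ [xᵢ, x_j] = 1 (1 ≤ i, j ≤ k),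
ℓ⁻¹xᵢℓ = x_{i+1} (1 ≤ i ≤ k-1), ℓ⁻¹x_kℓ = x₁⟩`, with `ℓ = none` and the `xᵢ`
(0-indexed) the elements `some i`, `i : Fin k`. -/
def bigRels (k : ℕ) : Set (FreeGroup (Option (Fin k))) :=
  let l : FreeGroup (Option (Fin k)) := FreeGroup.of none
  let x : Fin k → FreeGroup (Option (Fin k)) := fun i => FreeGroup.of (some i)
  (Set.range fun p : Fin k × Fin k => ⁅x p.1, x p.2⁆) ∪
    (Set.range fun i : Fin k =>
      l⁻¹ * x i * l * (x ⟨((i : ℕ) + 1) % k, Nat.mod_lt _ i.pos⟩)⁻¹)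

/-- The relators of `K_k = ⟨ℓ, x ∣ [x, ℓ^k] = 1, [x, ℓ⁻ⁱxℓⁱ] = 1 (i = 1, …, k-1)⟩`,
with generators `ℓ = 0`, `x = 1`. -/
def KRels (k : ℕ) : Set (FreeGroup (Fin 2)) :=
  let l : FreeGroup (Fin 2) := FreeGroup.of 0
  let x : FreeGroup (Fin 2) := FreeGroup.of 1
  {⁅x, l ^ k⁆} ∪
    Set.range (fun i : Fin (k - 1) => ⁅x, (l ^ ((i : ℕ) + 1))⁻¹ * x * l ^ ((i : ℕ) + 1)⁆)

/-! ### Generalities -/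

lemma mk_rel_eq_one {α : Type*} {rels : Set (FreeGroup α)} {r : FreeGroup α} (h : r ∈ rels) :
    PresentedGroup.mk rels r = 1 :=
  (QuotientGroup.eq_one_iff r).mpr (Subgroup.subset_normalClosure h)

noncomputable def quotEquivUnion {α : Type*} (R T : Set (FreeGroup α)) :
    (PresentedGroup R ⧸ Subgroup.normalClosure ((PresentedGroup.mk R) '' T)) ≃*
      PresentedGroup (R ∪ T) := by
  have hle : Subgroup.normalClosure R ≤ Subgroup.normalClosure (R ∪ T) :=
    Subgroup.normalClosure_mono Set.subset_union_left
  have hmap : Subgroup.map (QuotientGroup.mk' (Subgroup.normalClosure R))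
      (Subgroup.normalClosure (R ∪ T))
      = Subgroup.normalClosure ((PresentedGroup.mk R) '' T) := by
    rw [Subgroup.map_normalClosure _ _ (QuotientGroup.mk'_surjective _), Set.image_union]
    apply le_antisymm
    · apply @Subgroup.normalClosure_le_normal _ _ _ _ Subgroup.normalClosure_normal
      rw [Set.union_subset_iff]
      refine ⟨?_, Subgroup.subset_normalClosure⟩
      rintro _ ⟨r, hr, rfl⟩
      have h1 : PresentedGroup.mk R r = 1 := mk_rel_eq_one hr
      show QuotientGroup.mk' (Subgroup.normalClosure R) r ∈ _
      have : QuotientGroup.mk' (Subgroup.normalClosure R) r = 1 := h1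
      rw [this]
      exact Subgroup.one_mem _
    · exact Subgroup.normalClosure_mono Set.subset_union_right
  haveI : (Subgroup.map (QuotientGroup.mk' (Subgroup.normalClosure R))
      (Subgroup.normalClosure (R ∪ T))).Normal := hmap ▸ Subgroup.normalClosure_normal
  refine MulEquiv.trans ?_ (QuotientGroup.quotientQuotientEquivQuotient _ _ hle)
  exact @QuotientGroup.quotientMulEquivOfEq (FreeGroup α ⧸ Subgroup.normalClosure R) _ _ _
    Subgroup.normalClosure_normal this hmap.symm

/-! ### The extra relators -/

def Tset (k lam : ℕ) : Set (FreeGroup (Option (Fin k))) :=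
  Set.range fun i : Fin k =>
    FreeGroup.of (some i) *
      (FreeGroup.of (some (⟨((i : ℕ) + lam) % k, Nat.mod_lt _ i.pos⟩ : Fin k)))⁻¹

/-! ### Facts in `K_lam` -/

section KSide
variable (lam : ℕ)

abbrev KL : PresentedGroup (KRels lam) := PresentedGroup.of 0
abbrev KX : PresentedGroup (KRels lam) := PresentedGroup.of 1

def KC (n : ℤ) : PresentedGroup (KRels lam) := (KL lam ^ n)⁻¹ * KX lam * KL lam ^ n

lemma KC_zero : KC lam 0 = KX lam := by simp [KC]

lemma commX_Llam : Commute (KX lam) (KL lam ^ lam) := by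
  rw [← commutatorElement_eq_one_iff_commute]
  have h : (⁅FreeGroup.of (1 : Fin 2), FreeGroup.of (0 : Fin 2) ^ lam⁆ : FreeGroup (Fin 2)) ∈ KRels lam :=
    Set.mem_union_left _ rfl
  have := mk_rel_eq_one h
  simpa [map_commutatorElement, map_pow, PresentedGroup.of] using this

lemma commX_conj (i : ℕ) (hi : i < lam - 1) :
    Commute (KX lam) ((KL lam ^ (i + 1))⁻¹ * KX lam * KL lam ^ (i + 1)) := by
  rw [← commutatorElement_eq_one_iff_commute]
  have h : (⁅FreeGroup.of (1 : Fin 2), (FreeGroup.of (0 : Fin 2) ^ (i + 1))⁻¹ * FreeGroup.of (1 : Fin 2) *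
      FreeGroup.of (0 : Fin 2) ^ (i + 1)⁆ : FreeGroup (Fin 2)) ∈ KRels lam :=
    Set.mem_union_right _ ⟨⟨i, hi⟩, rfl⟩
  have := mk_rel_eq_one h
  simpa [map_commutatorElement, map_pow, PresentedGroup.of] using this

lemma conj_Llam : (KL lam ^ (lam : ℤ))⁻¹ * KX lam * KL lam ^ (lam : ℤ) = KX lam := by
  have h := (commX_Llam lam).symm.eq
  rw [zpow_natCast]
  rw [mul_assoc, ← h, ← mul_assoc, inv_mul_cancel, one_mul]

lemma KC_add_lam (n : ℤ) : KC lam (n + lam) = KC lam n := by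
  have hsplit : KL lam ^ (n + (lam : ℤ)) = KL lam ^ (lam : ℤ) * KL lam ^ n := by
    rw [← zpow_add, add_comm]
  rw [KC, hsplit, mul_inv_rev, KC]
  calc (KL lam ^ n)⁻¹ * (KL lam ^ (lam : ℤ))⁻¹ * KX lam * (KL lam ^ (lam : ℤ) * KL lam ^ n)
      = (KL lam ^ n)⁻¹ * ((KL lam ^ (lam : ℤ))⁻¹ * KX lam * KL lam ^ (lam : ℤ)) * KL lam ^ n := by
        group
    _ = (KL lam ^ n)⁻¹ * KX lam * KL lam ^ n := by rw [conj_Llam]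

end KSide

section KSide2
variable (lam : ℕ)

lemma KC_eq_of_dvd {m n : ℤ} (h : (lam : ℤ) ∣ m - n) : KC lam m = KC lam n := by
  obtain ⟨c, hc⟩ := h
  have hm : m = n + lam * c := by linarith
  subst hm
  induction c using Int.induction_on with
  | zero => simp
  | succ i ih =>
      rw [show n + (lam : ℤ) * (i + 1) = (n + lam * i) + lam by ring, KC_add_lam]
      exact ih (by ring)
  | pred i ih =>
      have h2 := KC_add_lam lam (n + (lam : ℤ) * (-i - 1))
      rw [show n + (lam : ℤ) * (-i - 1) + lam = n + lam * (-i) by ring] at h2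
      rw [← h2]
      exact ih (by ring)

lemma commX_KC (hlam : 0 < lam) (n : ℤ) : Commute (KX lam) (KC lam n) := by
  have hlamZ : (0 : ℤ) < lam := by exact_mod_cast hlam
  have hmod : KC lam n = KC lam (n % lam) :=
    (KC_eq_of_dvd lam ⟨-(n / lam), by rw [Int.emod_def]; ring⟩).symm
  rw [hmod]
  have h0 : 0 ≤ n % lam := Int.emod_nonneg n (by exact_mod_cast hlam.ne')
  have h1 : n % lam < lam := Int.emod_lt_of_pos n hlamZ
  set rn := (n % lam).toNat with hrn
  have h2 : n % lam = (rn : ℤ) := (Int.toNat_of_nonneg h0).symm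
  rw [h2]
  have hlt : rn < lam := by omega
  rcases rn with _ | i
  · simp only [Nat.cast_zero, KC_zero]
    exact Commute.refl _
  · have hi : i < lam - 1 := by omega
    have := commX_conj lam i hi
    rw [KC, show (((i + 1 : ℕ) : ℤ)) = ((i : ℤ) + 1) by push_cast; ring,
      show ((i : ℤ) + 1) = ((i + 1 : ℕ) : ℤ) by push_cast; ring, zpow_natCast]
    exact this

lemma commKC_KC (hlam : 0 < lam) (m n : ℤ) : Commute (KC lam m) (KC lam n) := by
  have h := (commX_KC lam hlam (n - m)).map (MulAut.conj ((KL lam ^ m)⁻¹))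
  have e1 : MulAut.conj ((KL lam ^ m)⁻¹) (KX lam) = KC lam m := by
    rw [MulAut.conj_apply, inv_inv, KC]
  have e2 : MulAut.conj ((KL lam ^ m)⁻¹) (KC lam (n - m)) = KC lam n := by
    have hz : KL lam ^ (n - m) * KL lam ^ m = KL lam ^ n := by
      rw [← zpow_add, sub_add_cancel]
    rw [MulAut.conj_apply, inv_inv, KC, KC, ← hz]
    group
  rwa [e1, e2] at h

lemma KL_conj_KC (n : ℤ) : (KL lam)⁻¹ * KC lam n * KL lam = KC lam (n + 1) := by
  rw [KC, KC, zpow_add, zpow_one]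
  group

lemma KC_natMod (k : ℕ) (hdvd : lam ∣ k) (m : ℕ) :
    KC lam (((m % k : ℕ) : ℤ)) = KC lam m := by
  apply KC_eq_of_dvd
  have h1 : m % k + k * (m / k) = m := Nat.mod_add_div m k
  have h2 : ((m % k : ℕ) : ℤ) - (m : ℤ) = -((k : ℤ) * (m / k : ℕ)) := by
    have h3 := congrArg (Nat.cast : ℕ → ℤ) h1
    push_cast at h3 ⊢
    linarith
  rw [h2]
  exact dvd_neg.mpr (dvd_mul_of_dvd_left (Int.natCast_dvd_natCast.mpr hdvd) _)

end KSide2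

/-! ### The map `φ : B → K` -/

def phiF (k lam : ℕ) : Option (Fin k) → PresentedGroup (KRels lam)
  | none => KL lam
  | some i => KC lam ((i : ℕ) : ℤ)

lemma hphi (k lam : ℕ) (hlam : 0 < lam) (hdvd : lam ∣ k) :
    ∀ r ∈ bigRels k ∪ Tset k lam, FreeGroup.lift (phiF k lam) r = 1 := by
  rintro r (h | h)
  · rcases h with h | h
    · obtain ⟨p, rfl⟩ := h
      rw [map_commutatorElement]
      simp only [FreeGroup.lift_apply_of, phiF]
      exact commutatorElement_eq_one_iff_commute.mpr (commKC_KC lam hlam _ _)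
    · obtain ⟨i, rfl⟩ := h
      simp only [map_mul, map_inv, FreeGroup.lift_apply_of, phiF]
      rw [KL_conj_KC, mul_inv_eq_one]
      rw [KC_natMod lam k hdvd ((i : ℕ) + 1)]
      norm_cast
  · obtain ⟨i, rfl⟩ := h
    simp only [map_mul, map_inv, FreeGroup.lift_apply_of, phiF]
    rw [mul_inv_eq_one, KC_natMod lam k hdvd ((i : ℕ) + lam)]
    apply KC_eq_of_dvd
    push_cast
    exact ⟨-1, by ring⟩

/-! ### Facts in the big group -/

section BSide
variable (k lam : ℕ)

abbrev BL : PresentedGroup (bigRels k ∪ Tset k lam) := PresentedGroup.of none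
abbrev BY (i : Fin k) : PresentedGroup (bigRels k ∪ Tset k lam) := PresentedGroup.of (some i)

lemma commBY (i j : Fin k) : Commute (BY k lam i) (BY k lam j) := by
  rw [← commutatorElement_eq_one_iff_commute]
  have h : (⁅FreeGroup.of (some i), FreeGroup.of (some j)⁆ :
      FreeGroup (Option (Fin k))) ∈ bigRels k ∪ Tset k lam :=
    Set.mem_union_left _ (Set.mem_union_left _ ⟨(i, j), rfl⟩)
  have := mk_rel_eq_one h
  simpa [map_commutatorElement, PresentedGroup.of] using this

lemma shiftBY (i : Fin k) :
    (BL k lam)⁻¹ * BY k lam i * BL k lam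
      = BY k lam ⟨((i : ℕ) + 1) % k, Nat.mod_lt _ i.pos⟩ := by
  have h : ((FreeGroup.of none)⁻¹ * FreeGroup.of (some i) * FreeGroup.of none *
      (FreeGroup.of (some (⟨((i : ℕ) + 1) % k, Nat.mod_lt _ i.pos⟩ : Fin k)))⁻¹ :
      FreeGroup (Option (Fin k))) ∈ bigRels k ∪ Tset k lam :=
    Set.mem_union_left _ (Set.mem_union_right _ ⟨i, rfl⟩)
  have h1 := mk_rel_eq_one h
  simp only [map_mul, map_inv] at h1
  rw [mul_inv_eq_one] at h1
  exact h1

lemma lamBY (i : Fin k) :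
    BY k lam i = BY k lam ⟨((i : ℕ) + lam) % k, Nat.mod_lt _ i.pos⟩ := by
  have h : (FreeGroup.of (some i) *
      (FreeGroup.of (some (⟨((i : ℕ) + lam) % k, Nat.mod_lt _ i.pos⟩ : Fin k)))⁻¹ :
      FreeGroup (Option (Fin k))) ∈ bigRels k ∪ Tset k lam :=
    Set.mem_union_right _ ⟨i, rfl⟩
  have h1 := mk_rel_eq_one h
  simp only [map_mul, map_inv] at h1
  rw [mul_inv_eq_one] at h1
  exact h1

lemma conj_powB (m : ℕ) (i : Fin k) :
    (BL k lam ^ m)⁻¹ * BY k lam i * BL k lam ^ m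
      = BY k lam ⟨((i : ℕ) + m) % k, Nat.mod_lt _ i.pos⟩ := by
  induction m with
  | zero =>
      simp only [pow_zero, inv_one, one_mul, mul_one]
      congr 1
      exact Fin.ext (by simp [Nat.mod_eq_of_lt i.isLt])
  | succ m ih =>
      rw [pow_succ, mul_inv_rev]
      calc (BL k lam)⁻¹ * (BL k lam ^ m)⁻¹ * BY k lam i * (BL k lam ^ m * BL k lam)
          = (BL k lam)⁻¹ * ((BL k lam ^ m)⁻¹ * BY k lam i * BL k lam ^ m) * BL k lam := by
            group
        _ = (BL k lam)⁻¹ * BY k lam ⟨((i : ℕ) + m) % k, Nat.mod_lt _ i.pos⟩ * BL k lam := by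
            rw [ih]
        _ = BY k lam ⟨((((i : ℕ) + m) % k) + 1) % k, Nat.mod_lt _ i.pos⟩ := shiftBY k lam _
        _ = BY k lam ⟨((i : ℕ) + (m + 1)) % k, Nat.mod_lt _ i.pos⟩ := by
            congr 1
            exact Fin.ext (by simp only [Nat.mod_add_mod]; rw [← add_assoc])

end BSide

/-! ### The map `ψ : K → B` -/

def psiF (k lam : ℕ) (hk : 0 < k) : Fin 2 → PresentedGroup (bigRels k ∪ Tset k lam) :=
  ![BL k lam, BY k lam ⟨0, hk⟩]

lemma hpsi (k lam : ℕ) (hk : 0 < k) (hlam : 0 < lam) (hdvd : lam ∣ k) :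
    ∀ r ∈ KRels lam, FreeGroup.lift (psiF k lam hk) r = 1 := by
  have hconj : ∀ m : ℕ, (BL k lam ^ m)⁻¹ * BY k lam ⟨0, hk⟩ * BL k lam ^ m
      = BY k lam ⟨m % k, Nat.mod_lt _ hk⟩ := by
    intro m
    rw [conj_powB]
    congr 1
    exact Fin.ext (by simp)
  rintro r (h | h)
  · rw [Set.mem_singleton_iff] at h
    subst h
    rw [map_commutatorElement]
    simp only [map_pow, FreeGroup.lift_apply_of, psiF, Matrix.cons_val_zero, Matrix.cons_val_one,
      Matrix.head_cons]
    rw [commutatorElement_eq_one_iff_mul_comm]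
    have hc : (BL k lam ^ lam)⁻¹ * BY k lam ⟨0, hk⟩ * BL k lam ^ lam = BY k lam ⟨0, hk⟩ := by
      rw [hconj lam]
      have h2 := lamBY k lam ⟨0, hk⟩
      rw [h2]
      congr 1
      exact Fin.ext (by simp)
    calc BY k lam ⟨0, hk⟩ * BL k lam ^ lam
        = BL k lam ^ lam * ((BL k lam ^ lam)⁻¹ * BY k lam ⟨0, hk⟩ * BL k lam ^ lam) := by group
      _ = BL k lam ^ lam * BY k lam ⟨0, hk⟩ := by rw [hc]
  · obtain ⟨i, rfl⟩ := h
    rw [map_commutatorElement]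
    simp only [map_mul, map_inv, map_pow, FreeGroup.lift_apply_of, psiF, Matrix.cons_val_zero,
      Matrix.cons_val_one, Matrix.head_cons]
    rw [hconj ((i : ℕ) + 1)]
    exact commutatorElement_eq_one_iff_commute.mpr (commBY k lam _ _)

/-! ### The isomorphism -/

noncomputable def phiHom (k lam : ℕ) (hlam : 0 < lam) (hdvd : lam ∣ k) :
    PresentedGroup (bigRels k ∪ Tset k lam) →* PresentedGroup (KRels lam) :=
  PresentedGroup.toGroup (hphi k lam hlam hdvd)

noncomputable def psiHom (k lam : ℕ) (hk : 0 < k) (hlam : 0 < lam) (hdvd : lam ∣ k) :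
    PresentedGroup (KRels lam) →* PresentedGroup (bigRels k ∪ Tset k lam) :=
  PresentedGroup.toGroup (hpsi k lam hk hlam hdvd)

lemma comp1 (k lam : ℕ) (hk : 0 < k) (hlam : 0 < lam) (hdvd : lam ∣ k) :
    (psiHom k lam hk hlam hdvd).comp (phiHom k lam hlam hdvd)
      = MonoidHom.id (PresentedGroup (bigRels k ∪ Tset k lam)) := by
  apply PresentedGroup.ext
  intro a
  cases a with
  | none =>
      simp only [MonoidHom.comp_apply, MonoidHom.id_apply, phiHom, psiHom,
        PresentedGroup.toGroup.of, phiF, psiF, Matrix.cons_val_zero]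
  | some i =>
      simp only [MonoidHom.comp_apply, MonoidHom.id_apply, phiHom,
        PresentedGroup.toGroup.of, phiF]
      rw [KC]
      simp only [map_mul, map_inv, map_zpow, psiHom, PresentedGroup.toGroup.of, psiF,
        Matrix.cons_val_zero, Matrix.cons_val_one, Matrix.head_cons]
      rw [zpow_natCast, conj_powB]
      show BY k lam _ = BY k lam i
      congr 1
      exact Fin.ext (by simp [Nat.mod_eq_of_lt i.isLt])

lemma comp2 (k lam : ℕ) (hk : 0 < k) (hlam : 0 < lam) (hdvd : lam ∣ k) :
    (phiHom k lam hlam hdvd).comp (psiHom k lam hk hlam hdvd)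
      = MonoidHom.id (PresentedGroup (KRels lam)) := by
  apply PresentedGroup.ext
  intro x
  fin_cases x
  · simp only [MonoidHom.comp_apply, MonoidHom.id_apply, phiHom, psiHom,
      PresentedGroup.toGroup.of, psiF, phiF, Matrix.cons_val_zero]
    rfl
  · show (phiHom k lam hlam hdvd) ((psiHom k lam hk hlam hdvd)
        (PresentedGroup.of (1 : Fin 2))) = PresentedGroup.of (1 : Fin 2)
    rw [psiHom, PresentedGroup.toGroup.of]
    have h1 : psiF k lam hk 1 = BY k lam ⟨0, hk⟩ := rfl
    rw [h1]
    show (phiHom k lam hlam hdvd) (PresentedGroup.of (some (⟨0, hk⟩ : Fin k)))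
        = PresentedGroup.of (1 : Fin 2)
    rw [phiHom, PresentedGroup.toGroup.of]
    show KC lam ((0 : ℕ) : ℤ) = _
    rw [show ((0 : ℕ) : ℤ) = 0 from rfl, KC_zero]

noncomputable def bigIso (k lam : ℕ) (hk : 0 < k) (hlam : 0 < lam) (hdvd : lam ∣ k) :
    PresentedGroup (bigRels k ∪ Tset k lam) ≃* PresentedGroup (KRels lam) :=
  MonoidHom.toMulEquiv (phiHom k lam hlam hdvd) (psiHom k lam hk hlam hdvd)
    (comp1 k lam hk hlam hdvd) (comp2 k lam hk hlam hdvd)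


/-- For `k ≥ 3` and `λ` a positive divisor of `k`, the quotient of
`⟨ℓ, x₁, …, x_k ∣ [xᵢ, x_j] = 1, ℓ⁻¹xᵢℓ = x_{i+1 mod k}⟩` by the normal closure of
the elements `xᵢ x_{i+λ}⁻¹` (indices mod `k`) is isomorphic to
`K_λ = ⟨ℓ, x ∣ [x, ℓ^λ] = 1, [x, ℓ⁻ⁱxℓⁱ] = 1 (i = 1, …, λ-1)⟩`. -/
theorem big_presentation_quotient_iso_Klambda (k lam : ℕ) (hk : 3 ≤ k)
    (hlam : 0 < lam) (hdvd : lam ∣ k) :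
    Nonempty
      ((PresentedGroup (bigRels k) ⧸ Subgroup.normalClosure
          (Set.range fun i : Fin k =>
            (PresentedGroup.of (some i) : PresentedGroup (bigRels k)) *
              (PresentedGroup.of (some ⟨((i : ℕ) + lam) % k, Nat.mod_lt _ i.pos⟩))⁻¹)) ≃*
        PresentedGroup (KRels lam)) := by
  have hk0 : 0 < k := by omega
  have hset : (Set.range fun i : Fin k =>
      (PresentedGroup.of (some i) : PresentedGroup (bigRels k)) *
        (PresentedGroup.of (some ⟨((i : ℕ) + lam) % k, Nat.mod_lt _ i.pos⟩))⁻¹)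
      = PresentedGroup.mk (bigRels k) '' Tset k lam := by
    rw [Tset, ← Set.range_comp]
    rfl
  refine ⟨?_⟩
  refine (QuotientGroup.quotientMulEquivOfEq (by rw [hset])).trans ?_
  exact (quotEquivUnion (bigRels k) (Tset k lam)).trans (bigIso k lam hk0 hlam hdvd)
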